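/- In the random model, let δ := 1/(3n²mφ) and let B_∞(r,δ) := {r̃ ∈ ℝ^m : ‖r − r̃‖_∞ ≤ δ} denote the closed ℓ_∞-ball. Then with probability at least 1 − 1/n there exists a directed cycle C of G such that B_∞(r,δ) ⊆ P^C. -/

import Mathlib

open MeasureTheory

/-- The `k`-th edge of the closed walk determined by the list of vertices `c`
(from the `k`-th vertex to the next one, cyclically). -/
def cycleEdge {n : ℕ} (c : List (Fin n)) (k : Fin c.length) : Fin n × Fin n :=
  (c.get k, c.get ⟨(k.1 + 1) % c.length, Nat.mod_lt _ (Nat.lt_of_le_of_lt (Nat.zero_le _) k.isLt)⟩)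

/-- `C ⊆ E` is the edge set of a simple directed cycle of the graph `([n], E)`. -/
def IsCycle {n : ℕ} (E : Finset (Fin n × Fin n)) (C : Finset {e : Fin n × Fin n // e ∈ E}) :
    Prop :=
  ∃ (c : List (Fin n)) (h : ∀ k : Fin c.length, cycleEdge c k ∈ E),
    0 < c.length ∧ c.Nodup ∧
      C = Finset.image (fun k => (⟨cycleEdge c k, h k⟩ : {e : Fin n × Fin n // e ∈ E}))
            Finset.univ

/-- Mean weight of a set of edges. -/
noncomputable def meanWeight {n : ℕ} {E : Finset (Fin n × Fin n)}
    (r : {e : Fin n × Fin n // e ∈ E} → ℝ) (C : Finset {e : Fin n × Fin n // e ∈ E}) : ℝ :=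
  (∑ e ∈ C, r e) / C.card

/-- `C` is an optimal (minimum mean weight) cycle of the DMDP with weights `r`. -/
def IsOptCycle {n : ℕ} (E : Finset (Fin n × Fin n)) (r : {e : Fin n × Fin n // e ∈ E} → ℝ)
    (C : Finset {e : Fin n × Fin n // e ∈ E}) : Prop :=
  IsCycle E C ∧ ∀ C', IsCycle E C' → meanWeight r C ≤ meanWeight r C'

/-- `P^C`: the set of weight vectors for which `C` is the unique optimal cycle. -/
def Pcell {n : ℕ} (E : Finset (Fin n × Fin n)) (C : Finset {e : Fin n × Fin n // e ∈ E}) :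
    Set ({e : Fin n × Fin n // e ∈ E} → ℝ) :=
  {r | IsOptCycle E r C ∧ ∀ C', IsOptCycle E r C' → C' = C}

/-- `U := ∪_C P^C`. -/
def Ucell {n : ℕ} (E : Finset (Fin n × Fin n)) : Set ({e : Fin n × Fin n // e ∈ E} → ℝ) :=
  ⋃ C, Pcell E C

/-- The directed graph `([n], E)` is strongly connected. -/
def StronglyConnected {n : ℕ} (E : Finset (Fin n × Fin n)) : Prop :=
  ∀ i j : Fin n, Relation.ReflTransGen (fun a b => (a, b) ∈ E) i j

section Comb
variable {n : ℕ} {E : Finset (Fin n × Fin n)}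

lemma cycle_card_eq {C : Finset {e : Fin n × Fin n // e ∈ E}} (c : List (Fin n))
    (h : ∀ k : Fin c.length, cycleEdge c k ∈ E) (hnd : c.Nodup)
    (hC : C = Finset.image (fun k => (⟨cycleEdge c k, h k⟩ : {e : Fin n × Fin n // e ∈ E}))
      Finset.univ) : C.card = c.length := by
  have hinj : Function.Injective
      (fun k => (⟨cycleEdge c k, h k⟩ : {e : Fin n × Fin n // e ∈ E})) := by
    intro k₁ k₂ hk
    have h1 : c.get k₁ = c.get k₂ := congrArg (fun e => e.1.1) hk
    exact (List.nodup_iff_injective_get.mp hnd) h1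
  rw [hC, Finset.card_image_of_injective _ hinj, Finset.card_univ, Fintype.card_fin]

lemma cycle_card_pos {C : Finset {e : Fin n × Fin n // e ∈ E}} (h : IsCycle E C) :
    0 < C.card := by
  obtain ⟨c, hk, hlen, hnd, hC⟩ := h
  rw [cycle_card_eq c hk hnd hC]; exact hlen

lemma cycle_card_le {C : Finset {e : Fin n × Fin n // e ∈ E}} (h : IsCycle E C) :
    C.card ≤ n := by
  obtain ⟨c, hk, hlen, hnd, hC⟩ := h
  rw [cycle_card_eq c hk hnd hC]
  simpa using hnd.length_le_card

lemma cycle_subset_eq {C C' : Finset {e : Fin n × Fin n // e ∈ E}} (h : IsCycle E C)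
    (h' : IsCycle E C') (hsub : C' ⊆ C) : C' = C := by
  obtain ⟨c, hk, hL, hnd, hC⟩ := h
  obtain ⟨c', hk', hL', hnd', hC'⟩ := h'
  set L := c.length with hLdef
  set L' := c'.length with hL'def
  -- membership of edges of c' in C
  have hmem : ∀ j : Fin L', ∃ k : Fin L, cycleEdge c k = cycleEdge c' j := by
    intro j
    have : (⟨cycleEdge c' j, hk' j⟩ : {e : Fin n × Fin n // e ∈ E}) ∈ C := by
      apply hsub
      rw [hC']
      exact Finset.mem_image.mpr ⟨j, Finset.mem_univ _, rfl⟩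
    rw [hC] at this
    obtain ⟨k, _, hkeq⟩ := Finset.mem_image.mp this
    exact ⟨k, congrArg Subtype.val hkeq⟩
  have hcinj : Function.Injective c.get := List.nodup_iff_injective_get.mp hnd
  have hc'inj : Function.Injective c'.get := List.nodup_iff_injective_get.mp hnd'
  have hmL : ∀ a : ℕ, a % L < L := fun a => Nat.mod_lt _ hL
  have hmL' : ∀ a : ℕ, a % L' < L' := fun a => Nat.mod_lt _ hL'
  obtain ⟨k0f, hk0⟩ := hmem ⟨0 % L', hmL' 0⟩
  set k0 := k0f.1
  -- key induction
  have key : ∀ j : ℕ, c'.get ⟨j % L', hmL' j⟩ = c.get ⟨(k0 + j) % L, hmL _⟩ := by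
    intro j
    induction j with
    | zero =>
      have h1 : c'.get ⟨0 % L', hmL' 0⟩ = c.get k0f := (congrArg Prod.fst hk0).symm
      rw [h1]
      congr 1
      exact Fin.ext (by simp [k0, Nat.mod_eq_of_lt k0f.isLt])
    | succ j ih =>
      obtain ⟨k, hkj⟩ := hmem ⟨j % L', hmL' j⟩
      have hfst : c.get k = c'.get ⟨j % L', hmL' j⟩ := congrArg Prod.fst hkj
      have hkval : k = ⟨(k0 + j) % L, hmL _⟩ := hcinj (by rw [hfst, ih])
      have hsnd := congrArg Prod.snd hkj
      simp only [cycleEdge] at hsnd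
      -- hsnd : c.get ⟨(k.1+1)%L⟩ = c'.get ⟨(j%L' + 1)%L'⟩
      rw [hkval] at hsnd
      have e1 : (j % L' + 1) % L' = (j + 1) % L' := (Nat.mod_modEq j L').add_right 1
      have e2 : ((k0 + j) % L + 1) % L = (k0 + (j + 1)) % L := by
        have h := (Nat.mod_modEq (k0 + j) L).add_right 1
        rwa [Nat.add_assoc] at h
      have := hsnd.symm
      rw [show (⟨(j % L' + 1) % L', _⟩ : Fin L') = ⟨(j+1) % L', hmL' _⟩ from Fin.ext e1,
        show (⟨((k0 + j) % L + 1) % L, _⟩ : Fin L) = ⟨(k0 + (j+1)) % L, hmL _⟩ from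
          Fin.ext e2] at this
      exact this
  -- L' ≤ L
  have hLle : L' ≤ L := by
    by_contra hlt
    push_neg at hlt
    have hLmod : L % L' = L := Nat.mod_eq_of_lt hlt
    have hidx : (⟨(k0 + L) % L, hmL _⟩ : Fin L) = ⟨(k0 + 0) % L, hmL _⟩ :=
      Fin.ext (by show (k0 + L) % L = (k0 + 0) % L; rw [Nat.add_mod_right, Nat.add_zero])
    have h3 : c'.get ⟨L % L', hmL' L⟩ = c'.get ⟨0 % L', hmL' 0⟩ := by
      rw [key L, key 0, hidx]
    have h5 : L % L' = 0 % L' := congrArg Fin.val (hc'inj h3)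
    rw [hLmod, Nat.zero_mod] at h5
    omega
  -- L ∣ L'
  have hdvd : L ∣ L' := by
    have h3 : c'.get ⟨L' % L', hmL' L'⟩ = c'.get ⟨0 % L', hmL' 0⟩ := by
      congr 1
      exact Fin.ext (by show L' % L' = 0 % L'; rw [Nat.mod_self, Nat.zero_mod])
    rw [key L', key 0] at h3
    have hmod : (k0 + L') % L = (k0 + 0) % L := congrArg Fin.val (hcinj h3)
    have hme : k0 + L' ≡ k0 + 0 [MOD L] := hmod
    have := Nat.ModEq.add_left_cancel' k0 hme
    exact (Nat.modEq_zero_iff_dvd).mp this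
  have hLL : L' = L := Nat.le_antisymm hLle (Nat.le_of_dvd hL' hdvd)
  apply Finset.eq_of_subset_of_card_le hsub
  rw [cycle_card_eq c hk hnd hC, cycle_card_eq c' hk' hnd' hC']
  exact hLL.ge

end Comb

section ExistsCycle
open Function

private lemma get_map_range {α : Type*} (f : ℕ → α) {p : ℕ}
    (k : Fin (List.map f (List.range p)).length) :
    (List.map f (List.range p)).get k = f k.1 := by
  simp

lemma exists_cycle {n : ℕ} {E : Finset (Fin n × Fin n)} (hn : 0 < n)
    (hout : ∀ i : Fin n, ∃ j : Fin n, (i, j) ∈ E) :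
    ∃ C : Finset {e : Fin n × Fin n // e ∈ E}, IsCycle E C := by
  classical
  set g : Fin n → Fin n := fun i => Classical.choose (hout i) with hg
  have hgE : ∀ i, (i, g i) ∈ E := fun i => Classical.choose_spec (hout i)
  set x0 : Fin n := ⟨0, hn⟩
  -- find a periodic point
  have hni : ¬ Function.Injective (fun k : Fin (n+1) => g^[k.1] x0) := by
    intro hinj
    have := Fintype.card_le_of_injective _ hinj
    simp at this
  obtain ⟨a, b, hne, hab⟩ : ∃ a b : Fin (n+1), a.1 < b.1 ∧ g^[a.1] x0 = g^[b.1] x0 := by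
    by_contra hcon
    push_neg at hcon
    apply hni
    intro a b hab
    rcases lt_trichotomy a.1 b.1 with h | h | h
    · exact absurd hab (by intro hh; exact absurd hh ((hcon a b h)))
    · exact Fin.ext h
    · exact absurd hab.symm (hcon b a h)
  set y := g^[a.1] x0 with hy
  have hper : IsPeriodicPt g (b.1 - a.1) y := by
    show g^[b.1-a.1] y = y
    rw [hy, ← Function.iterate_add_apply]
    rw [Nat.sub_add_cancel (le_of_lt hne)]
    exact hab.symm
  have hppos : 0 < minimalPeriod g y :=
    hper.minimalPeriod_pos (Nat.sub_pos_of_lt hne)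
  set p := minimalPeriod g y with hp
  set c : List (Fin n) := (List.range p).map (fun k => g^[k] y) with hc
  have hlen : c.length = p := by simp [hc]
  have hnd : c.Nodup := by
    rw [hc]
    refine List.Nodup.map_on ?_ List.nodup_range
    intro i hi j hj hij
    exact iterate_injOn_Iio_minimalPeriod (List.mem_range.mp hi) (List.mem_range.mp hj) hij
  have hget : ∀ k : Fin c.length, c.get k = g^[k.1] y :=
    fun k => get_map_range (fun k => g^[k] y) k
  have hstep : ∀ i : ℕ, i < p → g^[(i + 1) % c.length] y = g (g^[i] y) := by
    intro i hi
    rw [hlen]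
    rcases Nat.lt_or_ge (i + 1) p with h | h
    · rw [Nat.mod_eq_of_lt h, Function.iterate_succ_apply']
    · have hk1 : i + 1 = p := by omega
      rw [hk1, Nat.mod_self]
      have hpy : g^[p] y = y := isPeriodicPt_minimalPeriod g y
      have h2 : g^[i + 1] y = g (g^[i] y) := Function.iterate_succ_apply' g i y
      rw [hk1, hpy] at h2
      simpa using h2
  have hedge : ∀ k : Fin c.length, cycleEdge c k ∈ E := by
    intro k
    have hkp : k.1 < p := k.isLt.trans_eq hlen
    have e2 : c.get ⟨(k.1 + 1) % c.length,
        Nat.mod_lt _ (Nat.lt_of_le_of_lt (Nat.zero_le _) k.isLt)⟩ = g (g^[k.1] y) :=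
      (hget _).trans (hstep k.1 hkp)
    show (c.get k, c.get ⟨(k.1 + 1) % c.length,
        Nat.mod_lt _ (Nat.lt_of_le_of_lt (Nat.zero_le _) k.isLt)⟩) ∈ E
    rw [hget k, e2]
    exact hgE _
  refine ⟨Finset.image (fun k => (⟨cycleEdge c k, hedge k⟩ : {e : Fin n × Fin n // e ∈ E}))
      Finset.univ, c, hedge, ?_, hnd, rfl⟩
  rw [hlen]; exact hppos

end ExistsCycle



section Det
variable {n : ℕ} {E : Finset (Fin n × Fin n)}

/-- The per-edge "bad" event. -/
def BadSet (E : Finset (Fin n × Fin n)) (δ : ℝ) (e₀ : {e : Fin n × Fin n // e ∈ E}) :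
    Set ({e : Fin n × Fin n // e ∈ E} → ℝ) :=
  {r | ∃ C C' : Finset {e : Fin n × Fin n // e ∈ E}, IsCycle E C ∧ IsCycle E C' ∧
    e₀ ∉ C ∧ e₀ ∈ C' ∧ (∀ D, IsCycle E D → meanWeight r C ≤ meanWeight r D) ∧
    meanWeight r C' ≤ meanWeight r C + 2 * δ}

/-- The "good" event: some cycle is optimal with a gap of `2δ`. -/
def GoodSet (E : Finset (Fin n × Fin n)) (δ : ℝ) :
    Set ({e : Fin n × Fin n // e ∈ E} → ℝ) :=
  {r | ∃ C, IsCycle E C ∧ ∀ C', IsCycle E C' → C' ≠ C →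
    meanWeight r C + 2 * δ < meanWeight r C'}

lemma meanWeight_diff_le {C : Finset {e : Fin n × Fin n // e ∈ E}} (h : IsCycle E C)
    {r r' : {e : Fin n × Fin n // e ∈ E} → ℝ} {δ : ℝ}
    (hd : ∀ e, |r e - r' e| ≤ δ) : |meanWeight r C - meanWeight r' C| ≤ δ := by
  have hc : (0:ℝ) < C.card := by exact_mod_cast cycle_card_pos h
  have h1 : meanWeight r C - meanWeight r' C = (∑ e ∈ C, (r e - r' e)) / C.card := by
    rw [meanWeight, meanWeight, div_sub_div_same, Finset.sum_sub_distrib]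
  rw [h1, abs_div, abs_of_pos hc, div_le_iff₀ hc]
  calc |∑ e ∈ C, (r e - r' e)| ≤ ∑ e ∈ C, |r e - r' e| := Finset.abs_sum_le_sum_abs _ _
    _ ≤ ∑ _e ∈ C, δ := Finset.sum_le_sum (fun e _ => hd e)
    _ = δ * C.card := by rw [Finset.sum_const, nsmul_eq_mul, mul_comm]

lemma good_subset {δ : ℝ} {r : {e : Fin n × Fin n // e ∈ E} → ℝ} (hr : r ∈ GoodSet E δ) :
    ∃ C, IsCycle E C ∧ ∀ r' : {e : Fin n × Fin n // e ∈ E} → ℝ,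
      (∀ e, |r e - r' e| ≤ δ) → r' ∈ Pcell E C := by
  obtain ⟨C, hC, hgap⟩ := hr
  refine ⟨C, hC, fun r' hd => ?_⟩
  have hC' : |meanWeight r C - meanWeight r' C| ≤ δ := meanWeight_diff_le hC hd
  have hopt : ∀ D, IsCycle E D → meanWeight r' C ≤ meanWeight r' D := by
    intro D hD
    by_cases hDC : D = C
    · rw [hDC]
    · have h1 : |meanWeight r D - meanWeight r' D| ≤ δ := meanWeight_diff_le hD hd
      have h2 := hgap D hD hDC
      rw [abs_le] at hC' h1
      linarith [hC'.1, hC'.2, h1.1, h1.2]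
  refine ⟨⟨hC, hopt⟩, ?_⟩
  intro C'' hC''
  by_contra hne
  have h2 := hgap C'' hC''.1 hne
  have h1 : |meanWeight r C'' - meanWeight r' C''| ≤ δ := meanWeight_diff_le hC''.1 hd
  have h3 : meanWeight r' C'' ≤ meanWeight r' C := hC''.2 C hC
  rw [abs_le] at hC' h1
  linarith [hC'.1, hC'.2, h1.1, h1.2]

lemma compl_good_subset (hn : 0 < n) (hout : ∀ i : Fin n, ∃ j : Fin n, (i, j) ∈ E) (δ : ℝ)
    {r : {e : Fin n × Fin n // e ∈ E} → ℝ} (hr : r ∉ GoodSet E δ) :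
    ∃ e₀, r ∈ BadSet E δ e₀ := by
  classical
  obtain ⟨C₀, hC₀⟩ := exists_cycle hn hout
  set 𝒞 : Finset (Finset {e : Fin n × Fin n // e ∈ E}) :=
    Finset.univ.filter (fun C => IsCycle E C) with h𝒞
  have hC₀mem : C₀ ∈ 𝒞 := by simp [h𝒞, hC₀]
  obtain ⟨Cm, hCmmem, hCmmin⟩ := Finset.exists_min_image 𝒞 (fun C => meanWeight r C) ⟨C₀, hC₀mem⟩
  have hCm : IsCycle E Cm := by simpa [h𝒞] using hCmmem
  have hopt : ∀ D, IsCycle E D → meanWeight r Cm ≤ meanWeight r D := by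
    intro D hD
    exact hCmmin D (by simp [h𝒞, hD])
  simp only [GoodSet, Set.mem_setOf_eq, not_exists, not_and, not_forall] at hr
  obtain ⟨C', hC', hne, hle⟩ := hr Cm hCm
  push_neg at hle
  obtain ⟨e₀, he₀C', he₀Cm⟩ := Finset.not_subset.mp
    (fun hsub => hne (cycle_subset_eq hCm hC' hsub))
  exact ⟨e₀, Cm, C', hCm, hC', he₀Cm, he₀C', hopt, hle⟩

lemma bad_diameter {δ : ℝ} (hδ : 0 ≤ δ) {e₀ : {e : Fin n × Fin n // e ∈ E}}
    {r₁ r₂ : {e : Fin n × Fin n // e ∈ E} → ℝ}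
    (h₁ : r₁ ∈ BadSet E δ e₀) (h₂ : r₂ ∈ BadSet E δ e₀)
    (hagree : ∀ e, e ≠ e₀ → r₁ e = r₂ e) : r₂ e₀ - r₁ e₀ ≤ 2 * δ * n := by
  obtain ⟨C₁, _C₁', hC₁, _, he₀C₁, _, hopt₁, _⟩ := h₁
  obtain ⟨C₂, C₂', hC₂, hC₂', he₀C₂, he₀C₂', hopt₂, hb₂⟩ := h₂
  have hsame : ∀ (D : Finset {e : Fin n × Fin n // e ∈ E}), e₀ ∉ D →
      meanWeight r₁ D = meanWeight r₂ D := by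
    intro D hD
    unfold meanWeight
    congr 1
    exact Finset.sum_congr rfl (fun e he => hagree e (fun h => hD (h ▸ he)))
  have key : meanWeight r₂ C₂' ≤ meanWeight r₁ C₂' + 2 * δ := by
    have t1 : meanWeight r₂ C₂ ≤ meanWeight r₂ C₁ := hopt₂ C₁ hC₁
    have t2 : meanWeight r₁ C₁ = meanWeight r₂ C₁ := hsame C₁ he₀C₁
    have t3 : meanWeight r₁ C₁ ≤ meanWeight r₁ C₂' := hopt₁ C₂' hC₂'
    linarith
  have hcard : (0:ℝ) < C₂'.card := by exact_mod_cast cycle_card_pos hC₂'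
  have hsum : ∀ r : {e : Fin n × Fin n // e ∈ E} → ℝ,
      ∑ e ∈ C₂', r e = r e₀ + ∑ e ∈ C₂'.erase e₀, r e :=
    fun r => (Finset.add_sum_erase _ r he₀C₂').symm
  have herase : ∑ e ∈ C₂'.erase e₀, r₁ e = ∑ e ∈ C₂'.erase e₀, r₂ e :=
    Finset.sum_congr rfl (fun e he => hagree e (Finset.ne_of_mem_erase he))
  have hdiff : meanWeight r₂ C₂' - meanWeight r₁ C₂' = (r₂ e₀ - r₁ e₀) / C₂'.card := by
    unfold meanWeight
    rw [div_sub_div_same, hsum r₁, hsum r₂, herase]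
    ring_nf
  have hstep : (r₂ e₀ - r₁ e₀) / C₂'.card ≤ 2 * δ := by
    rw [← hdiff]; linarith
  rw [div_le_iff₀ hcard] at hstep
  have hcn : (C₂'.card : ℝ) ≤ n := by exact_mod_cast cycle_card_le hC₂'
  nlinarith

end Det

section Meas
variable {n : ℕ} {E : Finset (Fin n × Fin n)}

lemma measurable_meanWeight (C : Finset {e : Fin n × Fin n // e ∈ E}) :
    Measurable (fun r : {e : Fin n × Fin n // e ∈ E} → ℝ => meanWeight r C) := by
  unfold meanWeight
  exact (Finset.measurable_sum C (fun e _ => measurable_pi_apply e)).div_const _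

lemma badSet_measurable (δ : ℝ) (e₀ : {e : Fin n × Fin n // e ∈ E}) :
    MeasurableSet (BadSet E δ e₀) := by
  classical
  have : BadSet E δ e₀ = ⋃ C : Finset {e : Fin n × Fin n // e ∈ E},
      ⋃ C' : Finset {e : Fin n × Fin n // e ∈ E},
      ⋃ (_ : IsCycle E C ∧ IsCycle E C' ∧ e₀ ∉ C ∧ e₀ ∈ C'),
      ({r | meanWeight r C' ≤ meanWeight r C + 2 * δ} ∩
        ⋂ D, {r | IsCycle E D → meanWeight r C ≤ meanWeight r D}) := by
    ext r
    simp only [BadSet, Set.mem_setOf_eq, Set.mem_iUnion, Set.mem_inter_iff, Set.mem_iInter,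
      Set.mem_setOf_eq]
    constructor
    · rintro ⟨C, C', h1, h2, h3, h4, h5, h6⟩
      exact ⟨C, C', ⟨h1, h2, h3, h4⟩, h6, h5⟩
    · rintro ⟨C, C', ⟨h1, h2, h3, h4⟩, h6, h5⟩
      exact ⟨C, C', h1, h2, h3, h4, h5, h6⟩
  rw [this]
  refine MeasurableSet.iUnion (fun C => MeasurableSet.iUnion (fun C' =>
    MeasurableSet.iUnion (fun _ => MeasurableSet.inter ?_ (MeasurableSet.iInter (fun D => ?_)))))
  · exact measurableSet_le (measurable_meanWeight C') ((measurable_meanWeight C).add_const _)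
  · by_cases hD : IsCycle E D
    · simp only [hD, forall_true_left]
      exact measurableSet_le (measurable_meanWeight C) (measurable_meanWeight D)
    · simp only [hD, false_implies]
      exact MeasurableSet.univ

lemma measure_of_diam_le {f : ℝ → ENNReal} {φ L : ℝ} (hφ : 0 ≤ φ) (hL : 0 ≤ L)
    (hf : ∀ y, f y ≤ ENNReal.ofReal φ) (S : Set ℝ)
    (hS : ∀ t₁ ∈ S, ∀ t₂ ∈ S, t₂ - t₁ ≤ L) :
    volume.withDensity f S ≤ ENNReal.ofReal (φ * L) := by
  rcases S.eq_empty_or_nonempty with h | ⟨t₀, ht₀⟩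
  · simp [h]
  have hbdd : BddBelow S := ⟨t₀ - L, fun s hs => by have := hS s hs t₀ ht₀; linarith⟩
  set a := sInf S with ha
  have hsub : S ⊆ Set.Icc a (a + L) := by
    intro s hs
    constructor
    · exact csInf_le hbdd hs
    · have h1 : s - L ≤ a := le_csInf ⟨t₀, ht₀⟩ (fun b hb => by have := hS b hb s hs; linarith)
      linarith
  calc volume.withDensity f S ≤ volume.withDensity f (Set.Icc a (a + L)) :=
        measure_mono hsub
    _ = ∫⁻ y in Set.Icc a (a + L), f y := withDensity_apply f measurableSet_Icc
    _ ≤ ∫⁻ _y in Set.Icc a (a + L), ENNReal.ofReal φ := lintegral_mono (fun y => hf y)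
    _ = ENNReal.ofReal φ * volume (Set.Icc a (a + L)) := by
        rw [setLIntegral_const]
    _ = ENNReal.ofReal φ * ENNReal.ofReal L := by
        rw [Real.volume_Icc, add_sub_cancel_left]
    _ = ENNReal.ofReal (φ * L) := (ENNReal.ofReal_mul hφ).symm

end Meas

lemma pi_bad_le {n : ℕ} {E : Finset (Fin n × Fin n)} {δ φ : ℝ} (hδ : 0 ≤ δ) (hφ : 0 ≤ φ)
    (f : {e : Fin n × Fin n // e ∈ E} → ℝ → ENNReal)
    (hbound : ∀ e y, f e y ≤ ENNReal.ofReal φ)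
    (ν : {e : Fin n × Fin n // e ∈ E} → Measure ℝ)
    (hν : ∀ e, ν e = volume.withDensity (f e))
    [hprob : ∀ e, IsProbabilityMeasure (ν e)]
    (e₀ : {e : Fin n × Fin n // e ∈ E}) :
    Measure.pi ν (BadSet E δ e₀) ≤ ENNReal.ofReal (φ * (2 * δ * n)) := by
  classical
  set p : {e : Fin n × Fin n // e ∈ E} → Prop := fun e => e ≠ e₀ with hp
  haveI hu : Unique {i : {e : Fin n × Fin n // e ∈ E} // ¬ p i} :=
    ⟨⟨⟨e₀, not_not_intro rfl⟩⟩, fun a => Subtype.ext (not_not.mp a.2)⟩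
  set eqv := MeasurableEquiv.piEquivPiSubtypeProd (fun _ : {e : Fin n × Fin n // e ∈ E} => ℝ) p
    with heqv
  have MP := measurePreserving_piEquivPiSubtypeProd ν p
  have hBad := badSet_measurable (E := E) δ e₀
  set T := eqv.symm ⁻¹' (BadSet E δ e₀) with hTdef
  have hTmeas : MeasurableSet T := eqv.symm.measurable hBad
  have hpre : BadSet E δ e₀ = eqv ⁻¹' T := by
    ext r
    simp [hTdef]
  have h1 : Measure.pi ν (BadSet E δ e₀)
      = ((Measure.pi fun i : Subtype p => ν i).prod
          (Measure.pi fun i : {i // ¬ p i} => ν i)) T := by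
    rw [hpre, ← Measure.map_apply eqv.measurable hTmeas, MP.map_eq]
  rw [h1, Measure.prod_apply hTmeas]
  have hsec : ∀ x : (∀ _i : Subtype p, ℝ),
      (Measure.pi fun _i : {i // ¬ p i} => ν e₀) (Prod.mk x ⁻¹' T)
        ≤ ENNReal.ofReal (φ * (2 * δ * n)) := by
    intro x
    set fu := MeasurableEquiv.funUnique {i : {e : Fin n × Fin n // e ∈ E} // ¬ p i} ℝ with hfu
    have MPu : MeasurePreserving fu (Measure.pi fun _i : {i // ¬ p i} => ν e₀) (ν e₀) :=
      measurePreserving_piUnique _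
    set S₂ := Prod.mk x ⁻¹' T with hS₂
    have hS₂meas : MeasurableSet S₂ := measurable_prodMk_left hTmeas
    set S₃ := fu.symm ⁻¹' S₂ with hS₃
    have hS₃meas : MeasurableSet S₃ := fu.symm.measurable hS₂meas
    have hS₂eq : S₂ = fu ⁻¹' S₃ := by
      ext g
      simp only [hS₃, Set.mem_preimage, MeasurableEquiv.symm_apply_apply]
    have h2 : (Measure.pi fun _i : {i // ¬ p i} => ν e₀) S₂ = ν e₀ S₃ := by
      rw [hS₂eq, ← Measure.map_apply fu.measurable hS₃meas, MPu.map_eq]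
    rw [h2, hν e₀]
    apply measure_of_diam_le hφ (by positivity) (hbound e₀)
    intro t₁ ht₁ t₂ ht₂
    have hr : ∀ t : ℝ, eqv.symm (x, fu.symm t) e₀ = t := by
      intro t
      rw [heqv]
      simp only [MeasurableEquiv.piEquivPiSubtypeProd_symm_apply]
      rw [dif_neg (show ¬ p e₀ from not_not_intro rfl)]
      rw [hfu]
      simp only [MeasurableEquiv.funUnique_symm_apply]
      exact uniqueElim_const t _
    have hro : ∀ (t : ℝ) (e : {e : Fin n × Fin n // e ∈ E}) (h : p e),
        eqv.symm (x, fu.symm t) e = x ⟨e, h⟩ := by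
      intro t e h
      rw [heqv]
      simp only [MeasurableEquiv.piEquivPiSubtypeProd_symm_apply]
      rw [dif_pos h]
    have hB : ∀ t ∈ S₃, eqv.symm (x, fu.symm t) ∈ BadSet E δ e₀ := by
      intro t ht
      exact ht
    have := bad_diameter hδ (hB t₁ ht₁) (hB t₂ ht₂)
      (fun e he => by rw [hro t₁ e he, hro t₂ e he])
    rwa [hr t₁, hr t₂] at this
  have hconst : (fun i : {i // ¬ p i} => ν i) = fun _i : {i // ¬ p i} => ν e₀ := by
    funext i
    have h := not_not.mp i.2
    rw [show (i : {e : Fin n × Fin n // e ∈ E}) = e₀ from h]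
  rw [hconst]
  calc ∫⁻ x, (Measure.pi fun _i : {i // ¬ p i} => ν e₀) (Prod.mk x ⁻¹' T)
        ∂(Measure.pi fun i : Subtype p => ν i)
      ≤ ∫⁻ _x, ENNReal.ofReal (φ * (2 * δ * n)) ∂(Measure.pi fun i : Subtype p => ν i) :=
        lintegral_mono hsec
    _ = ENNReal.ofReal (φ * (2 * δ * n)) := by
        rw [lintegral_const, measure_univ, mul_one]


open ProbabilityTheory in
/-- In the random model, with `δ := 1/(3n²mφ)`, with probability at least
`1 - 1/n` the closed `ℓ∞`-ball of radius `δ` around the random weights is contained in a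
single cell `P^C`. -/
theorem stmt4 (n : ℕ) (hn : 0 < n) (E : Finset (Fin n × Fin n))
    (hsc : StronglyConnected E) (hout : ∀ i : Fin n, ∃ j : Fin n, (i, j) ∈ E)
    (φ : ℝ) (hφ : 0 < φ)
    (Ω : Type*) [MeasurableSpace Ω] (μ : Measure Ω) [IsProbabilityMeasure μ]
    (X : Ω → {e : Fin n × Fin n // e ∈ E} → ℝ)
    (hmeas : ∀ e, Measurable fun ω => X ω e)
    (hindep : iIndepFun (fun e ω => X ω e) μ)
    (f : {e : Fin n × Fin n // e ∈ E} → ℝ → ENNReal)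
    (hdens : ∀ e, Measure.map (fun ω => X ω e) μ = volume.withDensity (f e))
    (hbound : ∀ e y, f e y ≤ ENNReal.ofReal φ)
    (δ : ℝ) (hδ : δ = 1 / (3 * n ^ 2 * E.card * φ)) :
    μ {ω | ∃ C : Finset {e : Fin n × Fin n // e ∈ E}, IsCycle E C ∧
        ∀ r' : {e : Fin n × Fin n // e ∈ E} → ℝ,
          (∀ e, |X ω e - r' e| ≤ δ) → r' ∈ Pcell E C} ≥
      1 - (n : ENNReal)⁻¹ := by
  classical
  -- positivity facts
  have hmcard : 0 < E.card :=
    Finset.card_pos.mpr ⟨(⟨0, hn⟩, Classical.choose (hout ⟨0, hn⟩)),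
      Classical.choose_spec (hout ⟨0, hn⟩)⟩
  have hn' : (0:ℝ) < n := by exact_mod_cast hn
  have hm' : (0:ℝ) < E.card := by exact_mod_cast hmcard
  have h3 : (0:ℝ) < 3 * (n:ℝ)^2 * E.card * φ :=
    mul_pos (mul_pos (mul_pos (by norm_num) (pow_pos hn' 2)) hm') hφ
  have hδpos : 0 < δ := by rw [hδ]; exact div_pos one_pos h3
  -- the product measure
  set ν : {e : Fin n × Fin n // e ∈ E} → Measure ℝ := fun e => volume.withDensity (f e)
    with hν
  haveI hprob : ∀ e, IsProbabilityMeasure (ν e) := by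
    intro e
    rw [hν]
    simp only
    rw [← hdens e]
    exact Measure.isProbabilityMeasure_map (hmeas e).aemeasurable
  have hXm : Measurable X := measurable_pi_lambda X hmeas
  have hmap : Measure.map X μ = Measure.pi ν := by
    refine (Measure.pi_eq ?_).symm
    intro s hs
    rw [Measure.map_apply hXm (MeasurableSet.univ_pi hs)]
    have hXpre : X ⁻¹' (Set.pi Set.univ s) = ⋂ e, (fun ω => X ω e) ⁻¹' s e := by
      ext ω; simp [Set.mem_pi]
    rw [hXpre]
    have h2 := hindep.measure_inter_preimage_eq_mul Finset.univ (fun i _ => hs i)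
    rw [show (⋂ e, (fun ω => X ω e) ⁻¹' s e) = ⋂ e ∈ Finset.univ, (fun ω => X ω e) ⁻¹' s e by
      simp] at *
    rw [h2]
    exact Finset.prod_congr rfl (fun e _ => by
      rw [← Measure.map_apply (hmeas e) (hs e), hdens e])
  -- events
  set A := X ⁻¹' GoodSet E δ with hA
  have hsub1 : A ⊆ {ω | ∃ C : Finset {e : Fin n × Fin n // e ∈ E}, IsCycle E C ∧
      ∀ r' : {e : Fin n × Fin n // e ∈ E} → ℝ,
        (∀ e, |X ω e - r' e| ≤ δ) → r' ∈ Pcell E C} := by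
    intro ω hω
    exact good_subset hω
  have hsub2 : Aᶜ ⊆ ⋃ e₀, X ⁻¹' BadSet E δ e₀ := by
    intro ω hω
    obtain ⟨e₀, h⟩ := compl_good_subset hn hout δ hω
    exact Set.mem_iUnion.mpr ⟨e₀, h⟩
  -- bound on each bad event
  have hbadle : ∀ e₀, μ (X ⁻¹' BadSet E δ e₀) ≤ ENNReal.ofReal (φ * (2 * δ * n)) := by
    intro e₀
    rw [← Measure.map_apply hXm (badSet_measurable δ e₀), hmap]
    exact pi_bad_le hδpos.le hφ.le f hbound ν (fun e => rfl) e₀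
  -- total bad probability
  have htot : μ Aᶜ ≤ (E.card : ENNReal) * ENNReal.ofReal (φ * (2 * δ * n)) := by
    calc μ Aᶜ ≤ μ (⋃ e₀, X ⁻¹' BadSet E δ e₀) := measure_mono hsub2
      _ ≤ ∑' e₀, μ (X ⁻¹' BadSet E δ e₀) := measure_iUnion_le _
      _ ≤ ∑' _e₀ : {e : Fin n × Fin n // e ∈ E}, ENNReal.ofReal (φ * (2 * δ * n)) :=
          ENNReal.tsum_le_tsum hbadle
      _ = (E.card : ENNReal) * ENNReal.ofReal (φ * (2 * δ * n)) := by
          rw [tsum_fintype, Finset.sum_const, nsmul_eq_mul, Finset.card_univ, Fintype.card_coe]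
  -- numeric bound
  have hval : (E.card : ℝ) * (φ * (2 * δ * n)) = 2 / (3 * n) := by
    rw [hδ]
    field_simp
  have hnum : (E.card : ENNReal) * ENNReal.ofReal (φ * (2 * δ * n)) ≤ (n : ENNReal)⁻¹ := by
    rw [← ENNReal.ofReal_natCast E.card,
      ← ENNReal.ofReal_mul (by positivity : (0:ℝ) ≤ (E.card:ℝ)), hval]
    have hinv : (n : ENNReal)⁻¹ = ENNReal.ofReal ((n:ℝ)⁻¹) := by
      rw [ENNReal.ofReal_inv_of_pos hn', ENNReal.ofReal_natCast]
    rw [hinv]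
    apply ENNReal.ofReal_le_ofReal
    rw [div_le_iff₀ (by linarith : (0:ℝ) < 3 * n), inv_eq_one_div, div_mul_eq_mul_div,
      le_div_iff₀ hn']
    nlinarith
  have hAc : μ Aᶜ ≤ (n : ENNReal)⁻¹ := htot.trans hnum
  -- assemble
  have h1le : (1 : ENNReal) ≤ μ A + μ Aᶜ := by
    rw [← measure_univ (μ := μ), ← Set.union_compl_self A]
    exact measure_union_le _ _
  have hAge : 1 - μ Aᶜ ≤ μ A := tsub_le_iff_right.mpr h1le
  have hmono : (1 : ENNReal) - (n : ENNReal)⁻¹ ≤ 1 - μ Aᶜ := tsub_le_tsub_left hAc 1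
  exact le_trans (le_trans hmono hAge) (measure_mono hsub1)
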